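/- Let n ≥ 2 be an integer and S : (L^0)^n → (L^0)^n an injective map with the local property satisfying S(θ) = θ which maps each L^0-line onto an L^0-line. Then S is additive: S(x + y) = S(x) + S(y) for all x, y ∈ (L^0)^n. -/

import Mathlib

/-!
Statements from "The fundamental theorem of affine geometry in `(L⁰)ⁿ`" (Wu–Long).

`L⁰`, the algebra of equivalence classes (under `P`-a.e. equality) of real valued
random variables on a probability space `(Ω, F, P)`, is modeled as `Ω →ₘ[P] ℝ`,
and `(L⁰)ⁿ` as `Fin n → (Ω →ₘ[P] ℝ)` with the pointwise `L⁰`-module structure.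
-/

open MeasureTheory

noncomputable section

variable {Ω : Type*} [MeasurableSpace Ω] {P : Measure Ω}

/-- `L⁰ = Ω →ₘ[P] ℝ` is a commutative ring under the pointwise a.e. operations. -/
instance : CommRing (Ω →ₘ[P] ℝ) :=
  { (inferInstance : AddCommGroup (Ω →ₘ[P] ℝ)),
    (inferInstance : CommMonoid (Ω →ₘ[P] ℝ)) with
    left_distrib := fun a b c => AEEqFun.toGerm_injective <| by
      simp only [AEEqFun.mul_toGerm, AEEqFun.add_toGerm, mul_add]
    right_distrib := fun a b c => AEEqFun.toGerm_injective <| by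
      simp only [AEEqFun.mul_toGerm, AEEqFun.add_toGerm, add_mul]
    zero_mul := fun a => AEEqFun.toGerm_injective <| by
      simp only [AEEqFun.mul_toGerm, AEEqFun.zero_toGerm, zero_mul]
    mul_zero := fun a => AEEqFun.toGerm_injective <| by
      simp only [AEEqFun.mul_toGerm, AEEqFun.zero_toGerm, mul_zero] }

/-- `Ĩ_A` : the equivalence class of the indicator function of a measurable set `A`. -/
def ind (P : Measure Ω) {A : Set Ω} (hA : MeasurableSet A) : Ω →ₘ[P] ℝ :=
  AEEqFun.mk (A.indicator fun _ => (1 : ℝ)) (aestronglyMeasurable_const.indicator hA)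

namespace WuAux
set_option linter.unusedSectionVars false

lemma ind_coe {A : Set Ω} (hA : MeasurableSet A) :
    ⇑(ind P hA) =ᵐ[P] A.indicator (fun _ => (1 : ℝ)) := AEEqFun.coeFn_mk _ _

lemma ind_mul_self {A : Set Ω} (hA : MeasurableSet A) :
    ind P hA * ind P hA = ind P hA := by
  apply AEEqFun.ext
  filter_upwards [AEEqFun.coeFn_mul (ind P hA) (ind P hA), ind_coe hA] with ω h1 h2
  rw [h1, Pi.mul_apply, h2]
  by_cases h : ω ∈ A <;> simp [Set.indicator, h]

lemma ind_mul_compl {A : Set Ω} (hA : MeasurableSet A) :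
    ind P hA * ind P hA.compl = 0 := by
  apply AEEqFun.ext
  filter_upwards [AEEqFun.coeFn_mul (ind P hA) (ind P hA.compl), ind_coe hA,
    ind_coe hA.compl, AEEqFun.coeFn_zero (β := ℝ) (μ := P)] with ω h1 h2 h3 h4
  rw [h1, Pi.mul_apply, h2, h3, h4]
  by_cases h : ω ∈ A <;> simp [Set.indicator, h]

lemma ind_add_compl {A : Set Ω} (hA : MeasurableSet A) :
    ind P hA + ind P hA.compl = 1 := by
  apply AEEqFun.ext
  filter_upwards [AEEqFun.coeFn_add (ind P hA) (ind P hA.compl), ind_coe hA,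
    ind_coe hA.compl, AEEqFun.coeFn_one (β := ℝ) (μ := P)] with ω h1 h2 h3 h4
  rw [h1, Pi.add_apply, h2, h3, h4]
  by_cases h : ω ∈ A <;> simp [Set.indicator, h]

lemma ne_zero_of_coe_const [IsProbabilityMeasure P] {u : Ω →ₘ[P] ℝ} {c : ℝ} (hc : c ≠ 0)
    (h : ⇑u =ᵐ[P] fun _ => c) : u ≠ 0 := by
  intro h0
  subst h0
  have h2 : ⇑(0 : Ω →ₘ[P] ℝ) =ᵐ[P] (0 : Ω → ℝ) := AEEqFun.coeFn_zero
  have h3 : ∀ᵐ ω ∂P, False := by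
    filter_upwards [h, h2] with ω e1 e2
    rw [e2] at e1
    exact hc (by simpa using e1.symm)
  rw [Filter.eventually_false_iff_eq_bot, ae_eq_bot] at h3
  exact IsProbabilityMeasure.ne_zero P h3

lemma one_ne_zero_L [IsProbabilityMeasure P] : (1 : Ω →ₘ[P] ℝ) ≠ 0 :=
  ne_zero_of_coe_const one_ne_zero (by exact AEEqFun.coeFn_one (β := ℝ) (μ := P))

lemma two_ne_zero_L [IsProbabilityMeasure P] : (1 + 1 : Ω →ₘ[P] ℝ) ≠ 0 := by
  apply ne_zero_of_coe_const (c := 2) two_ne_zero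
  filter_upwards [AEEqFun.coeFn_add (1 : Ω →ₘ[P] ℝ) 1, AEEqFun.coeFn_one (β := ℝ) (μ := P)]
    with ω h1 h2
  rw [h1, Pi.add_apply, h2]
  norm_num

lemma exists_inv (γ : Ω →ₘ[P] ℝ) :
    ∃ (A : Set Ω) (hA : MeasurableSet A) (t : Ω →ₘ[P] ℝ),
      ind P hA * γ = γ ∧ t * γ = ind P hA ∧ ind P hA * t = t := by
  have hgm : Measurable (γ.aestronglyMeasurable.aemeasurable.mk ⇑γ) :=
    γ.aestronglyMeasurable.aemeasurable.measurable_mk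
  set g := γ.aestronglyMeasurable.aemeasurable.mk ⇑γ with hgdef
  have hge : ⇑γ =ᵐ[P] g := γ.aestronglyMeasurable.aemeasurable.ae_eq_mk
  have hA : MeasurableSet {ω | g ω ≠ 0} := by
    have := hgm (measurableSet_singleton (0 : ℝ))
    exact this.compl
  have htm : Measurable (fun ω => if g ω = 0 then (0:ℝ) else (g ω)⁻¹) :=
    Measurable.ite (hgm (measurableSet_singleton (0 : ℝ))) measurable_const hgm.inv
  refine ⟨{ω | g ω ≠ 0}, hA, AEEqFun.mk _ htm.aestronglyMeasurable, ?_, ?_, ?_⟩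
  · apply AEEqFun.ext
    filter_upwards [AEEqFun.coeFn_mul (ind P hA) γ, ind_coe hA, hge] with ω h1 h2 h3
    rw [h1, Pi.mul_apply, h2, h3]
    by_cases h : g ω = 0
    · simp [Set.indicator, h]
    · have : ω ∈ {ω | g ω ≠ 0} := h
      simp [Set.indicator_of_mem this]
  · apply AEEqFun.ext
    filter_upwards [AEEqFun.coeFn_mul (AEEqFun.mk _ htm.aestronglyMeasurable) γ,
      AEEqFun.coeFn_mk _ htm.aestronglyMeasurable, ind_coe hA, hge] with ω h1 h2 h3 h4
    rw [h1, Pi.mul_apply, h2, h3, h4]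
    by_cases h : g ω = 0
    · have : ω ∉ {ω | g ω ≠ 0} := by simp [h]
      simp [Set.indicator_of_notMem this, h]
    · have : ω ∈ {ω | g ω ≠ 0} := h
      simp [Set.indicator_of_mem this, h, inv_mul_cancel₀ h]
  · apply AEEqFun.ext
    filter_upwards [AEEqFun.coeFn_mul (ind P hA) (AEEqFun.mk _ htm.aestronglyMeasurable),
      AEEqFun.coeFn_mk _ htm.aestronglyMeasurable, ind_coe hA] with ω h1 h2 h3
    rw [h1, Pi.mul_apply, h2, h3]
    by_cases h : g ω = 0
    · have : ω ∉ {ω | g ω ≠ 0} := by simp [h]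
      simp [Set.indicator_of_notMem this, h]
    · have : ω ∈ {ω | g ω ≠ 0} := h
      simp [Set.indicator_of_mem this, h]

section RealVec
variable {n : ℕ}

/-- Pointwise linear independence of two vectors in `ℝⁿ`, phrased multiplicatively. -/
def VIndep (u v : Fin n → ℝ) : Prop :=
  ∀ a b : ℝ, (∀ i, a * u i = b * v i) → a = 0 ∧ b = 0

lemma sumsq_eq_zero_iff {u : Fin n → ℝ} : (∑ i, u i * u i) = 0 ↔ ∀ i, u i = 0 := by
  constructor
  · intro h i
    have := (Finset.sum_eq_zero_iff_of_nonneg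
      (fun j _ => mul_self_nonneg (u j))).1 h i (Finset.mem_univ i)
    exact mul_self_eq_zero.1 this
  · intro h
    exact Finset.sum_eq_zero fun i _ => by rw [h i]; ring

lemma vindep_congr {u v u' v' : Fin n → ℝ} (hu : ∀ i, u' i = u i) (hv : ∀ i, v' i = v i)
    (h : VIndep u v) : VIndep u' v' := by
  intro a b hab
  exact h a b fun i => by rw [← hu i, ← hv i]; exact hab i

lemma vi1 {u w : Fin n → ℝ} (h : VIndep u w) :
    VIndep (fun i => -u i) (fun i => w i + u i) := by
  intro a b hab
  have h2 := h (-a - b) b (fun i => by have := hab i; ring_nf at this ⊢; linarith)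
  exact ⟨by linarith [h2.1, h2.2], h2.2⟩

lemma vi2 {u w : Fin n → ℝ} (h : VIndep u w) {c : ℝ} (hc : c ≠ 0) :
    VIndep (fun i => c * u i) (fun i => -w i) := by
  intro a b hab
  have h2 := h (a * c) (-b) (fun i => by have := hab i; ring_nf at this ⊢; linarith)
  constructor
  · rcases mul_eq_zero.1 h2.1 with h' | h'
    · exact h'
    · exact absurd h' hc
  · linarith [h2.2]

lemma vi3 {u w : Fin n → ℝ} (h : VIndep u w) {c : ℝ} (hc1 : c ≠ -1) :
    VIndep (fun i => u i + w i) (fun i => c * u i - w i) := by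
  intro a b hab
  have h2 := h (a - b * c) (-(a + b)) (fun i => by have := hab i; ring_nf at this ⊢; linarith)
  have hb : b = 0 := by
    have hbc : b * (c + 1) = 0 := by nlinarith [h2.1, h2.2]
    rcases mul_eq_zero.1 hbc with h' | h'
    · exact h'
    · exact absurd (by linarith) hc1
  exact ⟨by nlinarith [h2.2], hb⟩

lemma vi_char {u v : Fin n → ℝ} (hu : (∑ i, u i * u i) ≠ 0)
    (h : ¬ ∀ i, v i = ((∑ i, u i * v i) / (∑ i, u i * u i)) * u i) : VIndep u v := by
  intro a b hab
  by_cases hb : b = 0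
  · subst hb
    refine ⟨?_, rfl⟩
    obtain ⟨i, hi⟩ : ∃ i, u i ≠ 0 := by
      by_contra hforall
      push_neg at hforall
      exact hu (sumsq_eq_zero_iff.2 hforall)
    have := hab i
    rw [zero_mul] at this
    exact (mul_eq_zero.1 this).resolve_right hi
  · exfalso
    apply h
    have hv : ∀ j, v j = (a / b) * u j := by
      intro j
      have := hab j
      field_simp
      linarith
    intro i
    have hip : (∑ j, u j * v j) = (a / b) * ∑ j, u j * u j := by
      rw [Finset.mul_sum]
      exact Finset.sum_congr rfl fun j _ => by rw [hv j]; ring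
    rw [hip, mul_div_assoc, div_self hu, mul_one]
    exact hv i

def bR (i0 : Fin n) : Fin n → ℝ := fun i => if i = i0 then 1 else 0

noncomputable def rotV (i0 i1 : Fin n) (u : Fin n → ℝ) : Fin n → ℝ :=
  if u i0 = 0 ∧ u i1 = 0 then bR i0
  else fun i => if i = i0 then -u i1 else if i = i1 then u i0 else 0

lemma rotV_apply (i0 i1 : Fin n) (u : Fin n → ℝ) (i : Fin n) :
    rotV i0 i1 u i = if u i0 = 0 ∧ u i1 = 0 then bR i0 i
      else if i = i0 then -u i1 else if i = i1 then u i0 else 0 := by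
  unfold rotV
  split <;> rfl

lemma vindep_bR {i0 i1 : Fin n} (h01 : i0 ≠ i1) : VIndep (bR i0) (bR i1) := by
  intro a b hab
  have h0 := hab i0
  have h1 := hab i1
  simp [bR, h01, h01.symm] at h0 h1
  exact ⟨h0, h1.symm⟩

lemma rot_indep {i0 i1 : Fin n} (h01 : i0 ≠ i1) {u : Fin n → ℝ} (hu : ∃ i, u i ≠ 0) :
    VIndep u (rotV i0 i1 u) := by
  intro a b hab
  by_cases hc : u i0 = 0 ∧ u i1 = 0
  · have h0 := hab i0
    rw [rotV_apply, if_pos hc, hc.1] at h0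
    simp [bR] at h0
    obtain ⟨j, hj⟩ := hu
    have hji0 : j ≠ i0 := fun h => hj (h ▸ hc.1)
    have hji1 : j ≠ i1 := fun h => hj (h ▸ hc.2)
    have h1 := hab j
    rw [rotV_apply, if_pos hc] at h1
    simp [bR, hji0] at h1
    rcases h1 with h' | h'
    · exact ⟨h', h0.symm⟩
    · exact absurd h' hj
  · have h0 := hab i0
    have h1 := hab i1
    rw [rotV_apply, if_neg hc, if_pos rfl] at h0
    rw [rotV_apply, if_neg hc, if_neg h01.symm, if_pos rfl] at h1
    have ha : a * (u i0 * u i0 + u i1 * u i1) = 0 := by linear_combination u i0 * h0 + u i1 * h1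
    have hne : u i0 * u i0 + u i1 * u i1 ≠ 0 := by
      intro hz
      apply hc
      constructor
      · nlinarith [mul_self_nonneg (u i0), mul_self_nonneg (u i1)]
      · nlinarith [mul_self_nonneg (u i0), mul_self_nonneg (u i1)]
    have ha0 : a = 0 := (mul_eq_zero.1 ha).resolve_right hne
    subst ha0
    rw [zero_mul] at h0 h1
    rcases not_and_or.1 hc with h' | h'
    · have := (mul_eq_zero.1 h1.symm).resolve_right h'
      constructor
      · rfl
      · exact this
    · have h0' := h0.symm
      have : b = 0 ∨ -u i1 = 0 := mul_eq_zero.1 h0'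
      rcases this with h'' | h''
      · exact ⟨rfl, h''⟩
      · exact absurd (by linarith) h'
  
end RealVec

section Mhelpers
variable {n : ℕ}

lemma glue_smul {A : Set Ω} (hA : MeasurableSet A) (z : Fin n → Ω →ₘ[P] ℝ) :
    z = ind P hA • z + ind P hA.compl • z := by
  have hsum : ind P hA + ind P hA.compl = 1 := ind_add_compl hA
  funext i
  show z i = ind P hA * z i + ind P hA.compl * z i
  linear_combination (-(z i)) * hsum

lemma ind_smul_congr {A : Set Ω} (hA : MeasurableSet A) {u v : Fin n → Ω →ₘ[P] ℝ}
    (h : ∀ᵐ ω ∂P, ω ∈ A → ∀ j, ⇑(u j) ω = ⇑(v j) ω) :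
    ind P hA • u = ind P hA • v := by
  funext j
  show ind P hA * u j = ind P hA * v j
  apply AEEqFun.ext
  filter_upwards [AEEqFun.coeFn_mul (ind P hA) (u j), AEEqFun.coeFn_mul (ind P hA) (v j),
    ind_coe hA, h] with ω h1 h2 h3 h4
  rw [h1, h2, Pi.mul_apply, Pi.mul_apply, h3]
  by_cases hω : ω ∈ A
  · rw [Set.indicator_of_mem hω, h4 hω j]
  · simp [Set.indicator_of_notMem hω]

lemma ind_smul_eq_ae {A : Set Ω} (hA : MeasurableSet A) {u v : Fin n → Ω →ₘ[P] ℝ}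
    (h : ind P hA • u = ind P hA • v) (j : Fin n) :
    ∀ᵐ ω ∂P, ω ∈ A → ⇑(u j) ω = ⇑(v j) ω := by
  have hj : ind P hA * u j = ind P hA * v j := congrFun h j
  filter_upwards [AEEqFun.coeFn_mul (ind P hA) (u j), AEEqFun.coeFn_mul (ind P hA) (v j),
    ind_coe hA] with ω h1 h2 h3
  intro hω
  have h0 : ⇑(ind P hA * u j) ω = ⇑(ind P hA * v j) ω := by rw [hj]
  rw [h1, h2, Pi.mul_apply, Pi.mul_apply, h3, Set.indicator_of_mem hω, one_mul, one_mul] at h0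
  exact h0

/-- Bundle of the hypotheses on `S`. -/
structure Hyp (P : Measure Ω) (n : ℕ)
    (S : (Fin n → Ω →ₘ[P] ℝ) → (Fin n → Ω →ₘ[P] ℝ)) : Prop where
  inj : Function.Injective S
  loc : ∀ (x : Fin n → Ω →ₘ[P] ℝ) (A : Set Ω) (hA : MeasurableSet A),
      ind P hA • S (ind P hA • x) = ind P hA • S x
  s0 : S 0 = 0
  line : ∀ x y : Fin n → Ω →ₘ[P] ℝ, x ≠ y →
      S '' {z | ∃ lam : Ω →ₘ[P] ℝ, z = lam • x + (1 - lam) • y}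
        = {z | ∃ lam : Ω →ₘ[P] ℝ, z = lam • S x + (1 - lam) • S y}

/-- `L⁰`-module independence of a pair. -/
def IndP (x y : Fin n → Ω →ₘ[P] ℝ) : Prop :=
  ∀ a b : Ω →ₘ[P] ℝ, a • x = b • y → a = 0 ∧ b = 0

variable {S : (Fin n → Ω →ₘ[P] ℝ) → (Fin n → Ω →ₘ[P] ℝ)}

lemma loc1 (hS : Hyp P n S) {A : Set Ω} (hA : MeasurableSet A)
    {u v : Fin n → Ω →ₘ[P] ℝ} (h : ind P hA • u = ind P hA • v) :
    ind P hA • S u = ind P hA • S v := by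
  rw [← hS.loc u A hA, h, hS.loc v A hA]

lemma loc2 (hS : Hyp P n S) {A : Set Ω} (hA : MeasurableSet A)
    {u v : Fin n → Ω →ₘ[P] ℝ} (h : ind P hA • S u = ind P hA • S v) :
    ind P hA • u = ind P hA • v := by
  have hee : ind P hA * ind P hA = ind P hA := ind_mul_self hA
  have heec : ind P hA * ind P hA.compl = 0 := ind_mul_compl hA
  have hcc : ind P hA.compl * ind P hA.compl = ind P hA.compl := ind_mul_self hA.compl
  set e := ind P hA
  set ec := ind P hA.compl
  set w := e • u + ec • v with hw
  have h1 : e • w = e • u := by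
    funext i
    show e * (e * u i + ec * v i) = e * u i
    linear_combination (u i) * hee + (v i) * heec
  have h2 : ec • w = ec • v := by
    funext i
    show ec * (e * u i + ec * v i) = ec * v i
    linear_combination (u i) * heec + (v i) * hcc
  have h3 : S w = S v := by
    have g1 : e • S w = e • S v := (loc1 hS hA h1).trans h
    have g2 : ec • S w = ec • S v := loc1 hS hA.compl h2
    calc S w = e • S w + ec • S w := glue_smul hA (S w)
      _ = e • S v + ec • S v := by rw [g1, g2]
      _ = S v := (glue_smul hA (S v)).symm
  have h4 : w = v := hS.inj h3
  exact h1.symm.trans (by rw [h4])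

/-- Bridge from pointwise a.e. independence on a set to localized `L⁰`-independence. -/
lemma hind_of_ae {A : Set Ω} (hA : MeasurableSet A) (x y : Fin n → Ω →ₘ[P] ℝ)
    (X Y : Fin n → Ω → ℝ)
    (hX : ∀ᵐ ω ∂P, ∀ i, ⇑(x i) ω = X i ω)
    (hY : ∀ᵐ ω ∂P, ∀ i, ⇑(y i) ω = Y i ω)
    (h : ∀ᵐ ω ∂P, ω ∈ A → VIndep (fun i => X i ω) (fun i => Y i ω))
    {a b : Ω →ₘ[P] ℝ} (hab : a • (ind P hA • x) = b • (ind P hA • y)) :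
    a * ind P hA = 0 ∧ b * ind P hA = 0 := by
  have hcomp : ∀ i, ∀ᵐ ω ∂P,
      ⇑a ω * (A.indicator (fun _ => (1:ℝ)) ω * X i ω)
        = ⇑b ω * (A.indicator (fun _ => (1:ℝ)) ω * Y i ω) := by
    intro i
    have hi : a * (ind P hA * x i) = b * (ind P hA * y i) := congrFun hab i
    filter_upwards [AEEqFun.coeFn_mul a (ind P hA * x i),
      AEEqFun.coeFn_mul (ind P hA) (x i),
      AEEqFun.coeFn_mul b (ind P hA * y i),
      AEEqFun.coeFn_mul (ind P hA) (y i), ind_coe hA, hX, hY] with ω e1 e2 e3 e4 e5 e6 e7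
    have h0 : ⇑(a * (ind P hA * x i)) ω = ⇑(b * (ind P hA * y i)) ω := by rw [hi]
    rw [e1, e3, Pi.mul_apply, Pi.mul_apply, e2, e4, Pi.mul_apply, Pi.mul_apply, e5,
      e6 i, e7 i] at h0
    exact h0
  have key : ∀ᵐ ω ∂P, ω ∈ A → (⇑a ω = 0 ∧ ⇑b ω = 0) := by
    filter_upwards [MeasureTheory.ae_all_iff.2 hcomp, h] with ω h1 h2
    intro hω
    apply h2 hω (⇑a ω) (⇑b ω)
    intro i
    have := h1 i
    rw [Set.indicator_of_mem hω, one_mul, one_mul] at this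
    exact this
  constructor
  · apply AEEqFun.ext
    filter_upwards [AEEqFun.coeFn_mul a (ind P hA), ind_coe hA, key,
      AEEqFun.coeFn_zero (β := ℝ) (μ := P)] with ω e1 e2 e3 e4
    rw [e1, Pi.mul_apply, e2, e4]
    by_cases hω : ω ∈ A
    · rw [Set.indicator_of_mem hω, (e3 hω).1]; simp
    · simp [Set.indicator_of_notMem hω]
  · apply AEEqFun.ext
    filter_upwards [AEEqFun.coeFn_mul b (ind P hA), ind_coe hA, key,
      AEEqFun.coeFn_zero (β := ℝ) (μ := P)] with ω e1 e2 e3 e4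
    rw [e1, Pi.mul_apply, e2, e4]
    by_cases hω : ω ∈ A
    · rw [Set.indicator_of_mem hω, (e3 hω).2]; simp
    · simp [Set.indicator_of_notMem hω]

end Mhelpers

section Core
variable {n : ℕ} [IsProbabilityMeasure P]
variable {S : (Fin n → Ω →ₘ[P] ℝ) → (Fin n → Ω →ₘ[P] ℝ)}

lemma indP_x_ne_zero {x y : Fin n → Ω →ₘ[P] ℝ} (hxy : IndP x y) : x ≠ 0 := by
  intro h
  subst h
  have h1 : (1 : Ω →ₘ[P] ℝ) • (0 : Fin n → Ω →ₘ[P] ℝ) = (0 : Ω →ₘ[P] ℝ) • y := by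
    funext i
    show (1 : Ω →ₘ[P] ℝ) * 0 = 0 * y i
    ring
  exact one_ne_zero_L (hxy 1 0 h1).1

lemma indP_symm {x y : Fin n → Ω →ₘ[P] ℝ} (hxy : IndP x y) : IndP y x := by
  intro a b h
  have := hxy b a h.symm
  exact ⟨this.2, this.1⟩

lemma indP_y_ne_zero {x y : Fin n → Ω →ₘ[P] ℝ} (hxy : IndP x y) : y ≠ 0 :=
  indP_x_ne_zero (indP_symm hxy)

lemma exists_rep (hS : Hyp P n S) {x y : Fin n → Ω →ₘ[P] ℝ} (hxy : IndP x y) :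
    ∃ β : Ω →ₘ[P] ℝ, S (x + y) = S x + β • S y := by
  have hx0 : x ≠ 0 := indP_x_ne_zero hxy
  have hy0 : y ≠ 0 := indP_y_ne_zero hxy
  set half : Ω →ₘ[P] ℝ := AEEqFun.mk (fun _ => (2⁻¹ : ℝ)) aestronglyMeasurable_const with hhalf
  have hh2 : half * (1 + 1) = 1 := by
    apply AEEqFun.ext
    filter_upwards [AEEqFun.coeFn_mul half (1 + 1),
      AEEqFun.coeFn_mk (fun _ => (2⁻¹ : ℝ)) aestronglyMeasurable_const,
      AEEqFun.coeFn_add (1 : Ω →ₘ[P] ℝ) 1, AEEqFun.coeFn_one (β := ℝ) (μ := P)]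
      with ω e1 e2 e3 e4
    rw [e1, Pi.mul_apply, e2, e3, Pi.add_apply, e4]
    norm_num
  -- S(2x) = p • S x
  have h2x : ∀ u : Fin n → Ω →ₘ[P] ℝ, u ≠ 0 → ∃ p : Ω →ₘ[P] ℝ, S (((1 + 1 : Ω →ₘ[P] ℝ)) • u) = p • S u := by
    intro u hu0
    have hmem : ((1 + 1) : Ω →ₘ[P] ℝ) • u ∈
        {z | ∃ lam : Ω →ₘ[P] ℝ, z = lam • u + (1 - lam) • (0 : Fin n → Ω →ₘ[P] ℝ)} := by
      refine ⟨1 + 1, ?_⟩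
      funext i
      show (1 + 1) * u i = (1 + 1) * u i + (1 - (1 + 1)) * 0
      ring
    have himg := Set.mem_image_of_mem S hmem
    rw [hS.line u 0 hu0] at himg
    obtain ⟨lam, hlam⟩ := himg
    rw [hS.s0] at hlam
    refine ⟨lam, ?_⟩
    rw [hlam]
    funext i
    show lam * S u i + (1 - lam) * 0 = lam * S u i
    ring
  obtain ⟨p, hp⟩ := h2x x hx0
  obtain ⟨q, hq⟩ := h2x y hy0
  have hne2 : ((1 + 1) : Ω →ₘ[P] ℝ) • x ≠ ((1 + 1) : Ω →ₘ[P] ℝ) • y := by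
    intro h
    exact two_ne_zero_L (hxy (1 + 1) (1 + 1) h).1
  have hmem : x + y ∈ {z | ∃ lam : Ω →ₘ[P] ℝ,
      z = lam • (((1 + 1) : Ω →ₘ[P] ℝ) • x) + (1 - lam) • (((1 + 1) : Ω →ₘ[P] ℝ) • y)} := by
    refine ⟨half, ?_⟩
    funext i
    show x i + y i = half * ((1 + 1) * x i) + (1 - half) * ((1 + 1) * y i)
    linear_combination (y i - x i) * hh2
  have himg := Set.mem_image_of_mem S hmem
  rw [hS.line _ _ hne2] at himg
  obtain ⟨lam, hlam⟩ := himg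
  rw [hp, hq] at hlam
  have hz : S (x + y) = (lam * p) • S x + ((1 - lam) * q) • S y := by
    rw [hlam]
    funext i
    show lam * (p * S x i) + (1 - lam) * (q * S y i)
      = (lam * p) * S x i + ((1 - lam) * q) * S y i
    ring
  set α := lam * p with hα
  set β := (1 - lam) * q with hβ
  -- show α = 1 using locality
  obtain ⟨A, hA, t, hti, htt, hte⟩ := exists_inv (1 - α)
  have hee : ind P hA * ind P hA = ind P hA := ind_mul_self hA
  set e := ind P hA with hedef
  have hxz : x ≠ x + y := by
    intro h
    exact hy0 (left_eq_add.1 h)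
  have himg2 : (1 - t) • S x + (1 - (1 - t)) • S (x + y) ∈
      {z | ∃ lam : Ω →ₘ[P] ℝ, z = lam • S x + (1 - lam) • S (x + y)} := ⟨1 - t, rfl⟩
  rw [← hS.line x (x + y) hxz] at himg2
  obtain ⟨w1, ⟨lam1, hlam1⟩, hw1⟩ := himg2
  have himgy : (t * β) • S y ∈ {z | ∃ lam : Ω →ₘ[P] ℝ, z = lam • S y + (1 - lam) • S 0} := by
    rw [hS.s0]
    refine ⟨t * β, ?_⟩
    funext i
    show (t * β) * S y i = (t * β) * S y i + (1 - t * β) * 0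
    ring
  rw [← hS.line y 0 hy0] at himgy
  obtain ⟨w2, ⟨lam2, hlam2⟩, hw2⟩ := himgy
  have hkey : e • S w1 = e • S w2 := by
    rw [hw1, hw2]
    funext i
    have hzi : S (x + y) i = α * S x i + β * S y i := congrFun hz i
    show e * ((1 - t) * S x i + (1 - (1 - t)) * S (x + y) i) = e * ((t * β) * S y i)
    linear_combination (-(S x i)) * hee + (-(e * S x i)) * htt + (e * t) * hzi
  have h5 := loc2 hS hA hkey
  rw [hlam1, hlam2] at h5
  have h6 : e • x = (e * (lam2 - 1 + lam1)) • y := by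
    funext i
    have h5i : e * (lam1 * x i + (1 - lam1) * (x i + y i))
        = e * (lam2 * y i + (1 - lam2) * 0) := congrFun h5 i
    show e * x i = (e * (lam2 - 1 + lam1)) * y i
    linear_combination h5i
  have he0 : e = 0 := (hxy _ _ h6).1
  have hα1 : α = 1 := by
    have h7 : (1 : Ω →ₘ[P] ℝ) - α = 0 := by
      rw [← hti, he0]
      ring
    have := sub_eq_zero.1 h7
    exact this.symm
  refine ⟨β, ?_⟩
  rw [hz, hα1]
  funext i
  show 1 * S x i + β * S y i = S x i + β * S y i
  ring

lemma indS (hS : Hyp P n S) {x y : Fin n → Ω →ₘ[P] ℝ} (hxy : IndP x y) :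
    IndP (S x) (S y) := by
  intro a b hab
  have hy0 : y ≠ 0 := indP_y_ne_zero hxy
  obtain ⟨A, hA, t, h1, h2, h3⟩ := exists_inv a
  set e := ind P hA with hedef
  have himgy : (t * b) • S y ∈ {z | ∃ lam : Ω →ₘ[P] ℝ, z = lam • S y + (1 - lam) • S 0} := by
    rw [hS.s0]
    refine ⟨t * b, ?_⟩
    funext i
    show (t * b) * S y i = (t * b) * S y i + (1 - t * b) * 0
    ring
  rw [← hS.line y 0 hy0] at himgy
  obtain ⟨w2, ⟨lam2, hlam2⟩, hw2⟩ := himgy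
  have hk2 : e • S x = e • S w2 := by
    rw [hw2]
    funext i
    have habi : a * S x i = b * S y i := congrFun hab i
    show e * S x i = e * ((t * b) * S y i)
    linear_combination (-(S x i)) * h2 + t * habi + (-(b * S y i)) * h3
  have h5 := loc2 hS hA hk2
  rw [hlam2] at h5
  have h6 : e • x = (e * lam2) • y := by
    funext i
    have h5i : e * x i = e * (lam2 * y i + (1 - lam2) * 0) := congrFun h5 i
    show e * x i = (e * lam2) * y i
    linear_combination h5i
  have he0 : e = 0 := (hxy _ _ h6).1
  have ha0 : a = 0 := by
    rw [← h1, he0]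
    ring
  refine ⟨ha0, ?_⟩
  have hbSy : b • S y = (0 : Fin n → Ω →ₘ[P] ℝ) := by
    rw [← hab, ha0]
    funext i
    show (0 : Ω →ₘ[P] ℝ) * S x i = 0
    ring
  obtain ⟨B, hB, s, k1, k2, k3⟩ := exists_inv b
  set f := ind P hB with hfdef
  have hfy : f • S y = f • S (0 : Fin n → Ω →ₘ[P] ℝ) := by
    rw [hS.s0]
    funext i
    have hbi : b * S y i = 0 := congrFun hbSy i
    show f * S y i = f * 0
    linear_combination (-(S y i)) * k2 + s * hbi
  have h7 := loc2 hS hB hfy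
  have h8 : (0 : Ω →ₘ[P] ℝ) • x = f • y := by
    funext i
    have h7i : f * y i = f * 0 := congrFun h7 i
    show 0 * x i = f * y i
    linear_combination -h7i
  have hf0 : f = 0 := (hxy _ _ h8).2
  rw [← k1, hf0]
  ring

lemma core (hS : Hyp P n S) {x y : Fin n → Ω →ₘ[P] ℝ} (hxy : IndP x y) :
    S (x + y) = S x + S y := by
  obtain ⟨β, hβ⟩ := exists_rep hS hxy
  obtain ⟨β', hβ'⟩ := exists_rep hS (indP_symm hxy)
  rw [add_comm y x] at hβ'
  have h3 : ((1 : Ω →ₘ[P] ℝ) - β') • S x = ((1 : Ω →ₘ[P] ℝ) - β) • S y := by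
    funext i
    have h1i : S (x + y) i = S x i + β * S y i := congrFun hβ i
    have h2i : S (x + y) i = S y i + β' * S x i := congrFun hβ' i
    show (1 - β') * S x i = (1 - β) * S y i
    linear_combination h2i - h1i
  have h4 := indS hS hxy _ _ h3
  have hβ1 : β = 1 := (sub_eq_zero.1 h4.2).symm
  rw [hβ, hβ1]
  funext i
  show S x i + 1 * S y i = S x i + S y i
  ring

end Core

section Loc
variable {n : ℕ} [IsProbabilityMeasure P]
variable {S : (Fin n → Ω →ₘ[P] ℝ) → (Fin n → Ω →ₘ[P] ℝ)}

lemma ind_univ : ind P (MeasurableSet.univ : MeasurableSet (Set.univ : Set Ω)) = 1 := by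
  apply AEEqFun.ext
  filter_upwards [ind_coe (MeasurableSet.univ : MeasurableSet (Set.univ : Set Ω)),
    AEEqFun.coeFn_one (β := ℝ) (μ := P)] with ω h1 h2
  rw [h1, h2]
  simp

lemma ind_univ_smul (z : Fin n → Ω →ₘ[P] ℝ) :
    ind P (MeasurableSet.univ : MeasurableSet (Set.univ : Set Ω)) • z = z := by
  funext i
  show ind P MeasurableSet.univ * z i = z i
  rw [ind_univ]
  ring

/-- Reps helpers -/
lemma reps_add {u v : Fin n → Ω →ₘ[P] ℝ} {U V : Fin n → Ω → ℝ}
    (hu : ∀ᵐ ω ∂P, ∀ i, ⇑(u i) ω = U i ω) (hv : ∀ᵐ ω ∂P, ∀ i, ⇑(v i) ω = V i ω) :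
    ∀ᵐ ω ∂P, ∀ i, ⇑((u + v) i) ω = U i ω + V i ω := by
  have hc : ∀ᵐ ω ∂P, ∀ i, ⇑(u i + v i) ω = ⇑(u i) ω + ⇑(v i) ω := by
    apply MeasureTheory.ae_all_iff.2
    intro i
    filter_upwards [AEEqFun.coeFn_add (u i) (v i)] with ω h
    rw [h, Pi.add_apply]
  filter_upwards [hu, hv, hc] with ω h1 h2 h3
  intro i
  show ⇑(u i + v i) ω = U i ω + V i ω
  rw [h3 i, h1 i, h2 i]

lemma reps_neg {u : Fin n → Ω →ₘ[P] ℝ} {U : Fin n → Ω → ℝ}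
    (hu : ∀ᵐ ω ∂P, ∀ i, ⇑(u i) ω = U i ω) :
    ∀ᵐ ω ∂P, ∀ i, ⇑((-u) i) ω = -(U i ω) := by
  have hc : ∀ᵐ ω ∂P, ∀ i, ⇑(-(u i)) ω = -(⇑(u i) ω) := by
    apply MeasureTheory.ae_all_iff.2
    intro i
    filter_upwards [AEEqFun.coeFn_neg (u i)] with ω h
    rw [h, Pi.neg_apply]
  filter_upwards [hu, hc] with ω h1 h2
  intro i
  show ⇑(-(u i)) ω = -(U i ω)
  rw [h2 i, h1 i]

lemma reps_sub {u v : Fin n → Ω →ₘ[P] ℝ} {U V : Fin n → Ω → ℝ}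
    (hu : ∀ᵐ ω ∂P, ∀ i, ⇑(u i) ω = U i ω) (hv : ∀ᵐ ω ∂P, ∀ i, ⇑(v i) ω = V i ω) :
    ∀ᵐ ω ∂P, ∀ i, ⇑((u - v) i) ω = U i ω - V i ω := by
  have hc : ∀ᵐ ω ∂P, ∀ i, ⇑(u i - v i) ω = ⇑(u i) ω - ⇑(v i) ω := by
    apply MeasureTheory.ae_all_iff.2
    intro i
    filter_upwards [AEEqFun.coeFn_sub (u i) (v i)] with ω h
    rw [h, Pi.sub_apply]
  filter_upwards [hu, hv, hc] with ω h1 h2 h3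
  intro i
  show ⇑(u i - v i) ω = U i ω - V i ω
  rw [h3 i, h1 i, h2 i]

lemma indP_of_ae {x y : Fin n → Ω →ₘ[P] ℝ} {X Y : Fin n → Ω → ℝ}
    (hX : ∀ᵐ ω ∂P, ∀ i, ⇑(x i) ω = X i ω) (hY : ∀ᵐ ω ∂P, ∀ i, ⇑(y i) ω = Y i ω)
    (h : ∀ᵐ ω ∂P, VIndep (fun i => X i ω) (fun i => Y i ω)) : IndP x y := by
  intro a b hab
  have hab' : a • (ind P MeasurableSet.univ • x) = b • (ind P MeasurableSet.univ • y) := by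
    rw [ind_univ_smul x, ind_univ_smul y]
    exact hab
  have h2 := hind_of_ae MeasurableSet.univ x y X Y hX hY
    (h.mono fun ω hω _ => hω) hab'
  rw [ind_univ, mul_one, mul_one] at h2
  exact h2

/-- Localized additivity on a set on which `x, y` are pointwise independent. -/
lemma locadd (hn : 2 ≤ n) (hS : Hyp P n S) {A : Set Ω} (hA : MeasurableSet A)
    (x y : Fin n → Ω →ₘ[P] ℝ)
    (hind : ∀ a b : Ω →ₘ[P] ℝ, a • (ind P hA • x) = b • (ind P hA • y) →
      a * ind P hA = 0 ∧ b * ind P hA = 0) :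
    ind P hA • S (x + y) = ind P hA • S x + ind P hA • S y := by
  have hee : ind P hA * ind P hA = ind P hA := ind_mul_self hA
  have heec : ind P hA * ind P hA.compl = 0 := ind_mul_compl hA
  have hcc : ind P hA.compl * ind P hA.compl = ind P hA.compl := ind_mul_self hA.compl
  have hsum : ind P hA + ind P hA.compl = 1 := ind_add_compl hA
  set e := ind P hA with hedef
  set ec := ind P hA.compl with hecdef
  have i0lt : (0 : ℕ) < n := by omega
  have i1lt : (1 : ℕ) < n := by omega
  set i0 : Fin n := ⟨0, i0lt⟩ with hi0
  set i1 : Fin n := ⟨1, i1lt⟩ with hi1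
  have h01 : i0 ≠ i1 := by
    intro h
    rw [hi0, hi1, Fin.mk.injEq] at h
    omega
  set b1 : Fin n → Ω →ₘ[P] ℝ := fun i => if i = i0 then 1 else 0 with hb1
  set b2 : Fin n → Ω →ₘ[P] ℝ := fun i => if i = i1 then 1 else 0 with hb2
  have hb1i0 : b1 i0 = 1 := if_pos rfl
  have hb1i1 : b1 i1 = 0 := if_neg h01.symm
  have hb2i0 : b2 i0 = 0 := if_neg h01
  have hb2i1 : b2 i1 = 1 := if_pos rfl
  set x' := e • x + ec • b1 with hx'
  set y' := e • y + ec • b2 with hy'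
  have hex : e • x' = e • x := by
    funext i
    show e * (e * x i + ec * b1 i) = e * x i
    linear_combination (x i) * hee + (b1 i) * heec
  have hey : e • y' = e • y := by
    funext i
    show e * (e * y i + ec * b2 i) = e * y i
    linear_combination (y i) * hee + (b2 i) * heec
  have hindP : IndP x' y' := by
    intro a b h
    have hepart : a • (e • x) = b • (e • y) := by
      funext i
      have hi : a * (e * x i + ec * b1 i) = b * (e * y i + ec * b2 i) := congrFun h i
      show a * (e * x i) = b * (e * y i)
      linear_combination e * hi + (b * y i - a * x i) * hee + (b * b2 i - a * b1 i) * heec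
    have hepair := hind a b hepart
    have hi0' : a * (e * x i0 + ec * 1) = b * (e * y i0 + ec * 0) := by
      have h' : a * (e * x i0 + ec * b1 i0) = b * (e * y i0 + ec * b2 i0) := congrFun h i0
      rw [hb1i0, hb2i0] at h'
      exact h'
    have hi1' : a * (e * x i1 + ec * 0) = b * (e * y i1 + ec * 1) := by
      have h' : a * (e * x i1 + ec * b1 i1) = b * (e * y i1 + ec * b2 i1) := congrFun h i1
      rw [hb1i1, hb2i1] at h'
      exact h'
    have haec : a * ec = 0 := by
      linear_combination ec * hi0' + (-a) * hcc + (b * y i0 - a * x i0) * heec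
    have hbec : b * ec = 0 := by
      linear_combination (-(ec)) * hi1' + (-b) * hcc + (a * x i1 - b * y i1) * heec
    constructor
    · linear_combination hepair.1 + haec + (-a) * hsum
    · linear_combination hepair.2 + hbec + (-b) * hsum
  have hcore : S (x' + y') = S x' + S y' := core hS hindP
  have harg : e • (x + y) = e • (x' + y') := by
    funext i
    show e * (x i + y i) = e * ((e * x i + ec * b1 i) + (e * y i + ec * b2 i))
    linear_combination (-(x i + y i)) * hee + (-(b1 i + b2 i)) * heec
  calc e • S (x + y) = e • S (x' + y') := loc1 hS hA harg
    _ = e • (S x' + S y') := by rw [hcore]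
    _ = e • S x' + e • S y' := by
        funext i
        show e * (S x' i + S y' i) = e * S x' i + e * S y' i
        ring
    _ = e • S x + e • S y := by rw [loc1 hS hA hex, loc1 hS hA hey]

end Loc

section Odd
variable {n : ℕ} [IsProbabilityMeasure P]
variable {S : (Fin n → Ω →ₘ[P] ℝ) → (Fin n → Ω →ₘ[P] ℝ)}

lemma odd_S (hn : 2 ≤ n) (hS : Hyp P n S) (v : Fin n → Ω →ₘ[P] ℝ) : S (-v) = - S v := by
  have i0lt : (0 : ℕ) < n := by omega
  have i1lt : (1 : ℕ) < n := by omega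
  set i0 : Fin n := ⟨0, i0lt⟩ with hi0
  set i1 : Fin n := ⟨1, i1lt⟩ with hi1
  have h01 : i0 ≠ i1 := by
    intro h
    rw [hi0, hi1, Fin.mk.injEq] at h
    omega
  set X : Fin n → Ω → ℝ := fun i => (v i).aestronglyMeasurable.aemeasurable.mk ⇑(v i) with hXdef
  have hXm : ∀ i, Measurable (X i) := fun i => (v i).aestronglyMeasurable.aemeasurable.measurable_mk
  have hX : ∀ᵐ ω ∂P, ∀ i, ⇑(v i) ω = X i ω :=
    MeasureTheory.ae_all_iff.2 fun i => (v i).aestronglyMeasurable.aemeasurable.ae_eq_mk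
  set T : Set Ω := {ω | ∀ i, X i ω = 0} with hT
  have hTm : MeasurableSet T := by
    have hTeq : T = ⋂ i, {ω | X i ω = 0} := by
      ext ω
      constructor
      · intro h
        exact Set.mem_iInter.2 h
      · intro h i
        exact Set.mem_iInter.1 h i
    rw [hTeq]
    exact MeasurableSet.iInter fun i => hXm i (measurableSet_singleton 0)
  set X' : Fin n → Ω → ℝ := fun i ω => if ω ∈ T then (if i = i0 then 1 else 0) else X i ω
    with hX'def
  have hX'm : ∀ i, Measurable (X' i) := fun i => Measurable.ite hTm measurable_const (hXm i)
  set x' : Fin n → Ω →ₘ[P] ℝ := fun i => AEEqFun.mk (X' i) (hX'm i).aestronglyMeasurable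
    with hx'def
  have hx'rep : ∀ᵐ ω ∂P, ∀ i, ⇑(x' i) ω = X' i ω :=
    MeasureTheory.ae_all_iff.2 fun i => AEEqFun.coeFn_mk _ _
  have hX'nz : ∀ ω, ∃ i, X' i ω ≠ 0 := by
    intro ω
    by_cases hω : ω ∈ T
    · refine ⟨i0, ?_⟩
      show (if ω ∈ T then (if i0 = i0 then (1:ℝ) else 0) else X i0 ω) ≠ 0
      rw [if_pos hω, if_pos rfl]
      norm_num
    · have h2 : ¬ ∀ i, X i ω = 0 := hω
      push_neg at h2
      obtain ⟨i, hi⟩ := h2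
      refine ⟨i, ?_⟩
      show (if ω ∈ T then (if i = i0 then (1:ℝ) else 0) else X i ω) ≠ 0
      rw [if_neg hω]
      exact hi
  set W : Fin n → Ω → ℝ := fun i ω => rotV i0 i1 (fun j => X' j ω) i with hWdef
  have hWm : ∀ i, Measurable (W i) := by
    intro i
    have hWeq : W i = fun ω => if (X' i0 ω = 0 ∧ X' i1 ω = 0) then bR i0 i
        else (if i = i0 then -(X' i1 ω) else if i = i1 then X' i0 ω else 0) := by
      funext ω
      exact rotV_apply i0 i1 (fun j => X' j ω) i
    rw [hWeq]
    apply Measurable.ite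
    · rw [Set.setOf_and]
      exact ((hX'm i0) (measurableSet_singleton 0)).inter ((hX'm i1) (measurableSet_singleton 0))
    · exact measurable_const
    · rcases eq_or_ne i i0 with h | h
      · simp only [if_pos h]
        exact (hX'm i1).neg
      · rcases eq_or_ne i i1 with h' | h'
        · simp only [if_neg h, if_pos h']
          exact hX'm i0
        · simp only [if_neg h, if_neg h']
          exact measurable_const
  set w : Fin n → Ω →ₘ[P] ℝ := fun i => AEEqFun.mk (W i) (hWm i).aestronglyMeasurable with hwdef
  have hwrep : ∀ᵐ ω ∂P, ∀ i, ⇑(w i) ω = W i ω :=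
    MeasureTheory.ae_all_iff.2 fun i => AEEqFun.coeFn_mk _ _
  have hvind : ∀ ω, VIndep (fun i => X' i ω) (fun i => W i ω) :=
    fun ω => rot_indep h01 (hX'nz ω)
  have hip1 : IndP x' w :=
    indP_of_ae hx'rep hwrep (Filter.Eventually.of_forall hvind)
  have hip2 : IndP (-x') (w + x') := by
    apply indP_of_ae (X := fun i ω => -(X' i ω)) (Y := fun i ω => W i ω + X' i ω)
      (reps_neg hx'rep) (reps_add hwrep hx'rep)
    apply Filter.Eventually.of_forall
    intro ω
    exact vi1 (hvind ω)
  have hadd1 : S (x' + w) = S x' + S w := core hS hip1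
  have hadd2 : S ((-x') + (w + x')) = S (-x') + S (w + x') := core hS hip2
  have harg : (-x') + (w + x') = w := by
    funext i
    show -(x' i) + (w i + x' i) = w i
    ring
  rw [harg, add_comm w x', hadd1] at hadd2
  have hodd' : S (-x') = - S x' := by
    have h0 : S (-x') + S x' = 0 := by
      apply add_right_cancel (b := S w)
      rw [add_assoc, ← hadd2, zero_add]
    exact eq_neg_of_add_eq_zero_left h0
  -- localize back to v
  have ha1 : ind P hTm • v = ind P hTm • (0 : Fin n → Ω →ₘ[P] ℝ) := by
    apply ind_smul_congr hTm
    filter_upwards [hX, AEEqFun.coeFn_zero (β := ℝ) (μ := P)] with ω h1 h2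
    intro hω j
    show ⇑(v j) ω = ⇑(0 : Ω →ₘ[P] ℝ) ω
    rw [h1 j, h2, Pi.zero_apply]
    exact hω j
  have ha2 : ind P hTm • (-v) = ind P hTm • (0 : Fin n → Ω →ₘ[P] ℝ) := by
    apply ind_smul_congr hTm
    filter_upwards [reps_neg hX, AEEqFun.coeFn_zero (β := ℝ) (μ := P)] with ω h1 h2
    intro hω j
    show ⇑((-v) j) ω = ⇑(0 : Ω →ₘ[P] ℝ) ω
    rw [h1 j, h2, Pi.zero_apply, hω j]
    norm_num
  have hb1 : ind P hTm.compl • v = ind P hTm.compl • x' := by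
    apply ind_smul_congr hTm.compl
    filter_upwards [hX, hx'rep] with ω h1 h2
    intro hω j
    have hω' : ω ∉ T := hω
    rw [h1 j, h2 j]
    show X j ω = (if ω ∈ T then (if j = i0 then (1:ℝ) else 0) else X j ω)
    rw [if_neg hω']
  have hb2 : ind P hTm.compl • (-v) = ind P hTm.compl • (-x') := by
    funext i
    have hcomp : ind P hTm.compl * v i = ind P hTm.compl * x' i := congrFun hb1 i
    show ind P hTm.compl * (-(v i)) = ind P hTm.compl * (-(x' i))
    linear_combination -hcomp
  have g1 : ind P hTm.compl • S (-v) = ind P hTm.compl • S (-x') := loc1 hS hTm.compl hb2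
  have g2 : ind P hTm.compl • S v = ind P hTm.compl • S x' := loc1 hS hTm.compl hb1
  have g3 : ind P hTm • S (-v) = ind P hTm • (0 : Fin n → Ω →ₘ[P] ℝ) := by
    have h' := loc1 hS hTm ha2
    rw [hS.s0] at h'
    exact h'
  have g4 : ind P hTm • S v = ind P hTm • (0 : Fin n → Ω →ₘ[P] ℝ) := by
    have h' := loc1 hS hTm ha1
    rw [hS.s0] at h'
    exact h'
  have hsum : ind P hTm + ind P hTm.compl = 1 := ind_add_compl hTm
  funext i
  have a1 : ind P hTm * S (-v) i = ind P hTm * 0 := congrFun g3 i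
  have a2 : ind P hTm.compl * S (-v) i = ind P hTm.compl * S (-x') i := congrFun g1 i
  have a3 : S (-x') i = -(S x' i) := congrFun hodd' i
  have a4 : ind P hTm.compl * S v i = ind P hTm.compl * S x' i := congrFun g2 i
  have a5 : ind P hTm * S v i = ind P hTm * 0 := congrFun g4 i
  show S (-v) i = -(S v i)
  linear_combination a1 + a2 + ind P hTm.compl * a3 + a4 + a5 + (-(S (-v) i + S v i)) * hsum

end Odd

end WuAux

open WuAux

/-- Step 3 of the proof of Theorem 3.1: `S` as in the fundamental
theorem is additive. -/
theorem additive
    [IsProbabilityMeasure P] (n : ℕ) (hn : 2 ≤ n)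
    (S : (Fin n → Ω →ₘ[P] ℝ) → (Fin n → Ω →ₘ[P] ℝ))
    (hinj : Function.Injective S)
    (hloc : ∀ (x : Fin n → Ω →ₘ[P] ℝ) (A : Set Ω) (hA : MeasurableSet A),
        ind P hA • S (ind P hA • x) = ind P hA • S x)
    (hS0 : S 0 = 0)
    (hline : ∀ x y : Fin n → Ω →ₘ[P] ℝ, x ≠ y →
        S '' {z | ∃ lam : Ω →ₘ[P] ℝ, z = lam • x + (1 - lam) • y}
          = {z | ∃ lam : Ω →ₘ[P] ℝ, z = lam • S x + (1 - lam) • S y}) :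
    ∀ x y : Fin n → Ω →ₘ[P] ℝ, S (x + y) = S x + S y := by
  intro x y
  have hS : Hyp P n S := ⟨hinj, hloc, hS0, hline⟩
  classical
  have i0lt : (0 : ℕ) < n := by omega
  have i1lt : (1 : ℕ) < n := by omega
  set i0 : Fin n := ⟨0, i0lt⟩ with hi0
  set i1 : Fin n := ⟨1, i1lt⟩ with hi1
  have h01 : i0 ≠ i1 := by
    intro h
    rw [hi0, hi1, Fin.mk.injEq] at h
    omega
  set X : Fin n → Ω → ℝ := fun i => (x i).aestronglyMeasurable.aemeasurable.mk ⇑(x i) with hXdef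
  have hXm : ∀ i, Measurable (X i) :=
    fun i => (x i).aestronglyMeasurable.aemeasurable.measurable_mk
  have hX : ∀ᵐ ω ∂P, ∀ i, ⇑(x i) ω = X i ω :=
    MeasureTheory.ae_all_iff.2 fun i => (x i).aestronglyMeasurable.aemeasurable.ae_eq_mk
  set Y : Fin n → Ω → ℝ := fun i => (y i).aestronglyMeasurable.aemeasurable.mk ⇑(y i) with hYdef
  have hYm : ∀ i, Measurable (Y i) :=
    fun i => (y i).aestronglyMeasurable.aemeasurable.measurable_mk
  have hY : ∀ᵐ ω ∂P, ∀ i, ⇑(y i) ω = Y i ω :=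
    MeasureTheory.ae_all_iff.2 fun i => (y i).aestronglyMeasurable.aemeasurable.ae_eq_mk
  set NX : Ω → ℝ := fun ω => ∑ i, X i ω * X i ω with hNXdef
  have hNXm : Measurable NX := Finset.measurable_sum _ fun i _ => (hXm i).mul (hXm i)
  set NY : Ω → ℝ := fun ω => ∑ i, Y i ω * Y i ω with hNYdef
  have hNYm : Measurable NY := Finset.measurable_sum _ fun i _ => (hYm i).mul (hYm i)
  set C : Ω → ℝ := fun ω => (∑ i, X i ω * Y i ω) / NX ω with hCdef
  have hCm : Measurable C :=
    (Finset.measurable_sum _ fun i _ => (hXm i).mul (hYm i)).div hNXm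
  set T0 : Set Ω := {ω | NX ω = 0} with hT0def
  have hT0 : MeasurableSet T0 := hNXm (measurableSet_singleton 0)
  set T1 : Set Ω := {ω | NY ω = 0} with hT1def
  have hT1 : MeasurableSet T1 := hNYm (measurableSet_singleton 0)
  set TD : Set Ω := {ω | ∀ i, Y i ω = C ω * X i ω} with hTDdef
  have hTD : MeasurableSet TD := by
    have h' : TD = ⋂ i, {ω | Y i ω = C ω * X i ω} := by
      ext ω
      constructor
      · intro h
        exact Set.mem_iInter.2 h
      · intro h i
        exact Set.mem_iInter.1 h i
    rw [h']
    exact MeasurableSet.iInter fun i => measurableSet_eq_fun (hYm i) (hCm.mul (hXm i))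
  set TC : Set Ω := {ω | C ω = -1} with hTCdef
  have hTC : MeasurableSet TC := hCm (measurableSet_singleton (-1))
  set A5 : Set Ω := T0ᶜ ∩ T1 with hA5def
  have hA5 : MeasurableSet A5 := hT0.compl.inter hT1
  set A1 : Set Ω := T0ᶜ ∩ (T1ᶜ ∩ TDᶜ) with hA1def
  have hA1 : MeasurableSet A1 := hT0.compl.inter (hT1.compl.inter hTD.compl)
  set A2 : Set Ω := T0ᶜ ∩ (T1ᶜ ∩ (TD ∩ TCᶜ)) with hA2def
  have hA2m : MeasurableSet A2 := hT0.compl.inter (hT1.compl.inter (hTD.inter hTC.compl))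
  set A3 : Set Ω := T0ᶜ ∩ (T1ᶜ ∩ (TD ∩ TC)) with hA3def
  have hA3m : MeasurableSet A3 := hT0.compl.inter (hT1.compl.inter (hTD.inter hTC))
  have hXzero : ∀ ω, ω ∈ T0 → ∀ i, X i ω = 0 := fun ω hω => sumsq_eq_zero_iff.1 hω
  have hYzero : ∀ ω, ω ∈ T1 → ∀ i, Y i ω = 0 := fun ω hω => sumsq_eq_zero_iff.1 hω
  have hXnz : ∀ ω, ω ∉ T0 → ∃ i, X i ω ≠ 0 := by
    intro ω hω
    have h2 : ¬ ∀ i, X i ω = 0 := fun h => hω (sumsq_eq_zero_iff.2 h)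
    push_neg at h2
    exact h2
  have hCne : ∀ ω, ω ∉ T1 → (∀ i, Y i ω = C ω * X i ω) → C ω ≠ 0 := by
    intro ω hω hdep hC0
    exact hω (sumsq_eq_zero_iff.2 fun i => by rw [hdep i, hC0, zero_mul])
  -- piece T0 : x = 0
  have g4 : ind P hT0 • S (x + y) = ind P hT0 • (S x + S y) := by
    have h1 : ind P hT0 • x = ind P hT0 • (0 : Fin n → Ω →ₘ[P] ℝ) := by
      apply ind_smul_congr hT0
      filter_upwards [hX, AEEqFun.coeFn_zero (β := ℝ) (μ := P)] with ω e1 e2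
      intro hω j
      show ⇑(x j) ω = ⇑(0 : Ω →ₘ[P] ℝ) ω
      rw [e1 j, e2, Pi.zero_apply]
      exact hXzero ω hω j
    have hSx : ind P hT0 • S x = ind P hT0 • (0 : Fin n → Ω →ₘ[P] ℝ) := by
      have h' := loc1 hS hT0 h1
      rw [hS.s0] at h'
      exact h'
    have h2 : ind P hT0 • (x + y) = ind P hT0 • y := by
      apply ind_smul_congr hT0
      filter_upwards [reps_add hX hY, hY] with ω e1 e2
      intro hω j
      rw [e1 j, e2 j, hXzero ω hω j, zero_add]
    have hS2 := loc1 hS hT0 h2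
    rw [hS2]
    funext i
    have c1 : ind P hT0 * S x i = ind P hT0 * 0 := congrFun hSx i
    show ind P hT0 * S y i = ind P hT0 * (S x i + S y i)
    linear_combination -c1
  -- piece A5 : y = 0
  have g5 : ind P hA5 • S (x + y) = ind P hA5 • (S x + S y) := by
    have h1 : ind P hA5 • y = ind P hA5 • (0 : Fin n → Ω →ₘ[P] ℝ) := by
      apply ind_smul_congr hA5
      filter_upwards [hY, AEEqFun.coeFn_zero (β := ℝ) (μ := P)] with ω e1 e2
      intro hω j
      show ⇑(y j) ω = ⇑(0 : Ω →ₘ[P] ℝ) ω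
      rw [e1 j, e2, Pi.zero_apply]
      exact hYzero ω hω.2 j
    have hSy : ind P hA5 • S y = ind P hA5 • (0 : Fin n → Ω →ₘ[P] ℝ) := by
      have h' := loc1 hS hA5 h1
      rw [hS.s0] at h'
      exact h'
    have h2 : ind P hA5 • (x + y) = ind P hA5 • x := by
      apply ind_smul_congr hA5
      filter_upwards [reps_add hX hY, hX] with ω e1 e2
      intro hω j
      rw [e1 j, e2 j, hYzero ω hω.2 j, add_zero]
    have hS2 := loc1 hS hA5 h2
    rw [hS2]
    funext i
    have c1 : ind P hA5 * S y i = ind P hA5 * 0 := congrFun hSy i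
    show ind P hA5 * S x i = ind P hA5 * (S x i + S y i)
    linear_combination -c1
  -- piece A1 : pointwise independent
  have hVI1 : ∀ᵐ ω ∂P, ω ∈ A1 → VIndep (fun i => X i ω) (fun i => Y i ω) := by
    apply Filter.Eventually.of_forall
    intro ω hω
    obtain ⟨h0, h1', hD⟩ := hω
    exact vi_char h0 hD
  have g1 : ind P hA1 • S (x + y) = ind P hA1 • (S x + S y) := by
    have k := locadd hn hS hA1 x y (fun a b hab => hind_of_ae hA1 x y X Y hX hY hVI1 hab)
    rw [k]
    funext i
    show ind P hA1 * S x i + ind P hA1 * S y i = ind P hA1 * (S x i + S y i)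
    ring
  -- piece A3 : y = -x
  have g3 : ind P hA3m • S (x + y) = ind P hA3m • (S x + S y) := by
    have h1 : ind P hA3m • (x + y) = ind P hA3m • (0 : Fin n → Ω →ₘ[P] ℝ) := by
      apply ind_smul_congr hA3m
      filter_upwards [reps_add hX hY, AEEqFun.coeFn_zero (β := ℝ) (μ := P)] with ω e1 e2
      intro hω j
      obtain ⟨h0, h1', hD, hC⟩ := hω
      show ⇑((x + y) j) ω = ⇑(0 : Ω →ₘ[P] ℝ) ω
      rw [e1 j, e2, Pi.zero_apply, hD j, hC]
      ring
    have hq1 : ind P hA3m • S (x + y) = ind P hA3m • (0 : Fin n → Ω →ₘ[P] ℝ) := by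
      have h' := loc1 hS hA3m h1
      rw [hS.s0] at h'
      exact h'
    have h2 : ind P hA3m • y = ind P hA3m • (-x) := by
      apply ind_smul_congr hA3m
      filter_upwards [hY, reps_neg hX] with ω e1 e2
      intro hω j
      obtain ⟨h0, h1', hD, hC⟩ := hω
      rw [e1 j, e2 j, hD j, hC]
      ring
    have hq2 := loc1 hS hA3m h2
    rw [odd_S hn hS x] at hq2
    rw [hq1]
    funext i
    have c2 : ind P hA3m * S y i = ind P hA3m * (-(S x i)) := congrFun hq2 i
    show ind P hA3m * 0 = ind P hA3m * (S x i + S y i)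
    linear_combination -c2
  -- piece A2 : y = c x, c ≠ 0, -1
  set X'' : Fin n → Ω → ℝ := fun i ω => if ω ∈ T0 then (if i = i0 then 1 else 0) else X i ω
    with hX''def
  have hX''m : ∀ i, Measurable (X'' i) := fun i => Measurable.ite hT0 measurable_const (hXm i)
  have hX''nz : ∀ ω, ∃ i, X'' i ω ≠ 0 := by
    intro ω
    by_cases hω : ω ∈ T0
    · refine ⟨i0, ?_⟩
      show (if ω ∈ T0 then (if i0 = i0 then (1:ℝ) else 0) else X i0 ω) ≠ 0
      rw [if_pos hω, if_pos rfl]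
      norm_num
    · obtain ⟨i, hi⟩ := hXnz ω hω
      refine ⟨i, ?_⟩
      show (if ω ∈ T0 then (if i = i0 then (1:ℝ) else 0) else X i ω) ≠ 0
      rw [if_neg hω]
      exact hi
  set W : Fin n → Ω → ℝ := fun i ω => rotV i0 i1 (fun j => X'' j ω) i with hWdef
  have hWm : ∀ i, Measurable (W i) := by
    intro i
    have hWeq : W i = fun ω => if (X'' i0 ω = 0 ∧ X'' i1 ω = 0) then bR i0 i
        else (if i = i0 then -(X'' i1 ω) else if i = i1 then X'' i0 ω else 0) := by
      funext ω
      exact rotV_apply i0 i1 (fun j => X'' j ω) i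
    rw [hWeq]
    apply Measurable.ite
    · rw [Set.setOf_and]
      exact ((hX''m i0) (measurableSet_singleton 0)).inter
        ((hX''m i1) (measurableSet_singleton 0))
    · exact measurable_const
    · rcases eq_or_ne i i0 with h | h
      · simp only [if_pos h]
        exact (hX''m i1).neg
      · rcases eq_or_ne i i1 with h' | h'
        · simp only [if_neg h, if_pos h']
          exact hX''m i0
        · simp only [if_neg h, if_neg h']
          exact measurable_const
  set w : Fin n → Ω →ₘ[P] ℝ := fun i => AEEqFun.mk (W i) (hWm i).aestronglyMeasurable with hwdef
  have hwrep : ∀ᵐ ω ∂P, ∀ i, ⇑(w i) ω = W i ω :=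
    MeasureTheory.ae_all_iff.2 fun i => AEEqFun.coeFn_mk _ _
  have hbase : ∀ ω, ω ∉ T0 → VIndep (fun i => X i ω) (fun i => W i ω) := by
    intro ω hω
    have h' := rot_indep h01 (hX''nz ω)
    apply vindep_congr (fun i => ?_) (fun i => rfl) h'
    show X i ω = (if ω ∈ T0 then (if i = i0 then (1:ℝ) else 0) else X i ω)
    rw [if_neg hω]
  have hVIp1 : ∀ᵐ ω ∂P, ω ∈ A2 →
      VIndep (fun i => X i ω + W i ω) (fun i => Y i ω - W i ω) := by
    apply Filter.Eventually.of_forall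
    intro ω hω
    obtain ⟨h0, h1', hD, hC⟩ := hω
    have h' := vi3 (hbase ω h0) (c := C ω) hC
    apply vindep_congr (fun i => rfl) (fun i => ?_) h'
    show Y i ω - W i ω = C ω * X i ω - W i ω
    rw [hD i]
  have hVIp2 : ∀ᵐ ω ∂P, ω ∈ A2 → VIndep (fun i => X i ω) (fun i => W i ω) :=
    Filter.Eventually.of_forall fun ω hω => hbase ω hω.1
  have hVIp3 : ∀ᵐ ω ∂P, ω ∈ A2 → VIndep (fun i => Y i ω) (fun i => -(W i ω)) := by
    apply Filter.Eventually.of_forall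
    intro ω hω
    obtain ⟨h0, h1', hD, hC⟩ := hω
    have hC0 : C ω ≠ 0 := hCne ω h1' hD
    have h' := vi2 (hbase ω h0) hC0
    apply vindep_congr (fun i => ?_) (fun i => rfl) h'
    show Y i ω = C ω * X i ω
    exact hD i
  have g2 : ind P hA2m • S (x + y) = ind P hA2m • (S x + S y) := by
    have k1 := locadd hn hS hA2m (x + w) (y - w)
      (fun a b hab => hind_of_ae hA2m (x + w) (y - w) _ _
        (reps_add hX hwrep) (reps_sub hY hwrep) hVIp1 hab)
    have harg : (x + w) + (y - w) = x + y := by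
      funext i
      show (x i + w i) + (y i - w i) = x i + y i
      ring
    rw [harg] at k1
    have k2 := locadd hn hS hA2m x w
      (fun a b hab => hind_of_ae hA2m x w _ _ hX hwrep hVIp2 hab)
    have k3 := locadd hn hS hA2m y (-w)
      (fun a b hab => hind_of_ae hA2m y (-w) _ _ hY (reps_neg hwrep) hVIp3 hab)
    rw [sub_eq_add_neg y w, k3, k2, odd_S hn hS w] at k1
    rw [k1]
    funext i
    show (ind P hA2m * S x i + ind P hA2m * S w i)
        + (ind P hA2m * S y i + ind P hA2m * (-(S w i)))
      = ind P hA2m * (S x i + S y i)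
    ring
  -- glue the five pieces
  have cover : ∀ ω, ω ∈ T0 ∨ ω ∈ A5 ∨ ω ∈ A1 ∨ ω ∈ A2 ∨ ω ∈ A3 := by
    intro ω
    by_cases h0 : NX ω = 0
    · exact Or.inl h0
    by_cases h1 : NY ω = 0
    · exact Or.inr (Or.inl ⟨h0, h1⟩)
    by_cases hD : ∀ i, Y i ω = C ω * X i ω
    · by_cases hC : C ω = -1
      · exact Or.inr (Or.inr (Or.inr (Or.inr ⟨h0, h1, hD, hC⟩)))
      · exact Or.inr (Or.inr (Or.inr (Or.inl ⟨h0, h1, hD, hC⟩)))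
    · exact Or.inr (Or.inr (Or.inl ⟨h0, h1, hD⟩))
  funext j
  apply AEEqFun.ext
  filter_upwards [ind_smul_eq_ae hT0 g4 j, ind_smul_eq_ae hA5 g5 j, ind_smul_eq_ae hA1 g1 j,
    ind_smul_eq_ae hA2m g2 j, ind_smul_eq_ae hA3m g3 j] with ω q4 q5 q1 q2 q3
  rcases cover ω with h | h | h | h | h
  · exact q4 h
  · exact q5 h
  · exact q1 h
  · exact q2 h
  · exact q3 h
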